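/- Let Λ be a compact metric space, f : Λ → Λ continuous, and suppose that the closure of the set of periodic measures equals M_f(Λ) and that M_f(Λ) is compact and connected in the weak* topology. Then there exists a sequence of closed balls B_n ⊆ M_f(Λ) with centers periodic measures Y_n and radii ε_n → 0 such that B_n ∩ B_{n+1} ≠ ∅ and ⋂_{N≥1} ⋃_{n≥N} B_n = M_f(Λ). -/

import Mathlib

open MeasureTheory Filter Topology
open scoped ENNReal NNReal

variable {Λ : Type*}

/-- Empirical measure `(1/(N+1)) ∑_{j=0}^{N} δ_{f^j y}` (this indexing realizes the
sequence `μ_N` for `N ≥ 1`). -/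
noncomputable def empP [MetricSpace Λ] [MeasurableSpace Λ] [BorelSpace Λ]
    (f : Λ → Λ) (y : Λ) (N : ℕ) : ProbabilityMeasure Λ :=
  ⟨((N + 1 : ℕ) : ℝ≥0∞)⁻¹ • ∑ j ∈ Finset.range (N + 1), Measure.dirac (f^[j] y), by
    constructor
    simp [Measure.smul_apply, ENNReal.inv_mul_cancel]⟩

/-- `V_f(y)`: the set of weak* accumulation points of the empirical measures of `y`. -/
def accPts [MetricSpace Λ] [MeasurableSpace Λ] [BorelSpace Λ] (f : Λ → Λ) (y : Λ) :
    Set (ProbabilityMeasure Λ) :=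
  {μ | MapClusterPt μ atTop (empP f y)}

/-- `M_f(Λ)`: the set of `f`-invariant Borel probability measures. -/
def invProb [MetricSpace Λ] [MeasurableSpace Λ] [BorelSpace Λ] (f : Λ → Λ) :
    Set (ProbabilityMeasure Λ) :=
  {μ | (μ : Measure Λ).map f = μ}

/-- The periodic measure of a periodic point `x` of period `k ≥ 1`. -/
noncomputable def perP [MetricSpace Λ] [MeasurableSpace Λ] [BorelSpace Λ]
    (f : Λ → Λ) (x : Λ) (k : ℕ) (hk : 0 < k) : ProbabilityMeasure Λ :=
  ⟨((k : ℕ) : ℝ≥0∞)⁻¹ • ∑ i ∈ Finset.range k, Measure.dirac (f^[i] x), by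
    constructor
    simp [Measure.smul_apply, ENNReal.inv_mul_cancel, hk.ne']⟩

section AbstractChain
variable {X : Type*} [MetricSpace X]

/-- δ-chains within `S` from `a` to `b`. -/
def ChainIn (S : Set X) (δ : ℝ) (a b : X) : Prop :=
  ∃ n : ℕ, ∃ c : ℕ → X, c 0 = a ∧ c n = b ∧ (∀ i, c i ∈ S) ∧
    ∀ i < n, dist (c i) (c (i + 1)) < δ

lemma chainIn_refl {S : Set X} {δ : ℝ} {a : X} (ha : a ∈ S) : ChainIn S δ a a :=
  ⟨0, fun _ => a, rfl, rfl, fun _ => ha, fun i hi => absurd hi (Nat.not_lt_zero i)⟩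

lemma chainIn_extend {S : Set X} {δ : ℝ} {a b b' : X} (h : ChainIn S δ a b)
    (hb' : b' ∈ S) (hd : dist b b' < δ) : ChainIn S δ a b' := by
  obtain ⟨n, c, h0, hn, hmem, hstep⟩ := h
  refine ⟨n + 1, fun i => if i ≤ n then c i else b', by simp [h0], by simp, ?_, ?_⟩
  · intro i; dsimp only; split
    · exact hmem _
    · exact hb'
  · intro i hi
    rcases Nat.lt_succ_iff_lt_or_eq.1 hi with h' | h'
    · have h1 : i ≤ n := h'.le
      have h2 : i + 1 ≤ n := h'
      simp only [if_pos h1, if_pos h2]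
      exact hstep i h'
    · subst h'
      simp only [le_refl, if_pos, Nat.not_succ_le_self, if_neg, hn]
      simpa [hn] using hd

lemma IsPreconnected.chainIn {S : Set X} (hS : IsPreconnected S) {a b : X}
    (ha : a ∈ S) (hb : b ∈ S) {δ : ℝ} (hδ : 0 < δ) : ChainIn S δ a b := by
  by_contra hnb
  set R : Set X := {x | ChainIn S δ a x} with hR
  set U : Set X := ⋃ x ∈ R, Metric.ball x δ with hU
  set V : Set X := ⋃ x ∈ S \ R, Metric.ball x δ with hV
  have hUo : IsOpen U := isOpen_biUnion fun _ _ => Metric.isOpen_ball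
  have hVo : IsOpen V := isOpen_biUnion fun _ _ => Metric.isOpen_ball
  have hcov : S ⊆ U ∪ V := by
    intro x hx
    by_cases hxR : x ∈ R
    · exact Or.inl (Set.mem_biUnion hxR (Metric.mem_ball_self hδ))
    · exact Or.inr (Set.mem_biUnion ⟨hx, hxR⟩ (Metric.mem_ball_self hδ))
  have hSU : (S ∩ U).Nonempty :=
    ⟨a, ha, Set.mem_biUnion (chainIn_refl ha) (Metric.mem_ball_self hδ)⟩
  have hSV : (S ∩ V).Nonempty :=
    ⟨b, hb, Set.mem_biUnion ⟨hb, hnb⟩ (Metric.mem_ball_self hδ)⟩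
  obtain ⟨y, hyS, hyU, hyV⟩ := hS U V hUo hVo hcov hSU hSV
  obtain ⟨x, hxR, hxy⟩ := Set.mem_iUnion₂.1 hyU
  obtain ⟨x', hx'SR, hx'y⟩ := Set.mem_iUnion₂.1 hyV
  have hy : ChainIn S δ a y :=
    chainIn_extend hxR hyS (by rw [Metric.mem_ball, dist_comm] at hxy; exact hxy)
  exact hx'SR.2 (chainIn_extend hy hx'SR.1 (Metric.mem_ball.1 hx'y))

/-- A chain in `P` (the dense subset) starting at `a` of length `n`. -/
def GoodChain (P : Set X) (δ : ℝ) (a : X) (n : ℕ) (c : ℕ → X) : Prop :=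
  c 0 = a ∧ (∀ i, c i ∈ P) ∧ ∀ i < n, dist (c i) (c (i + 1)) < δ

lemma chainIn_approx {S P : Set X} (hP : S ⊆ closure P) {a b : X}
    (ha : a ∈ P) (hb : b ∈ P) {δ : ℝ} (hδ : 0 < δ)
    (h : ChainIn S δ a b) :
    ∃ n c, GoodChain P (3 * δ) a n c ∧ c n = b := by
  obtain ⟨n, c, h0, hn, hmem, hstep⟩ := h
  rcases Nat.eq_zero_or_pos n with hn0 | hnpos
  · subst hn0
    exact ⟨0, fun _ => a, ⟨rfl, fun _ => ha, fun i hi => absurd hi (Nat.not_lt_zero i)⟩,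
      by rw [← h0, hn]⟩
  have happrox : ∀ i, ∃ p ∈ P, dist (c i) p < δ := fun i =>
    Metric.mem_closure_iff.1 (hP (hmem i)) δ hδ
  choose p hpP hpd using happrox
  set c' : ℕ → X := fun i => if i = 0 then a else if n ≤ i then b else p i with hc'
  have hclose : ∀ i ≤ n, dist (c i) (c' i) < δ := by
    intro i hi
    by_cases h1 : i = 0
    · subst h1; simp [hc', h0, hδ]
    by_cases h2 : n ≤ i
    · have : i = n := le_antisymm hi h2
      subst this
      simp [hc', h1, h2, hn, hδ]
    · simp only [hc', if_neg h1, if_neg h2]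
      exact hpd i
  refine ⟨n, c', ⟨by simp [hc'], ?_, ?_⟩, ?_⟩
  · intro i
    simp only [hc']
    split
    · exact ha
    split
    · exact hb
    · exact hpP i
  · intro i hi
    have d4 : dist (c' i) (c' (i + 1)) ≤
        dist (c' i) (c i) + dist (c i) (c (i + 1)) + dist (c (i + 1)) (c' (i + 1)) :=
      dist_triangle4 _ _ _ _
    have h1 := hclose i hi.le
    have h2 := hclose (i + 1) hi
    rw [dist_comm] at h1
    calc dist (c' i) (c' (i + 1)) ≤ _ := d4
      _ < δ + δ + δ := by
          have := hstep i hi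
          linarith
      _ = 3 * δ := by ring
  · simp [hc', hnpos.ne']

/-- Gluing two good chains. -/
lemma goodChain_append {P : Set X} {δ : ℝ} {a : X} {n : ℕ} {c : ℕ → X}
    (h : GoodChain P δ a n c) {n₂ : ℕ} {c₂ : ℕ → X} (h₂ : GoodChain P δ (c n) n₂ c₂) :
    ∃ c', GoodChain P δ a (n + n₂) c' ∧ (∀ i ≤ n, c' i = c i) ∧
      ∀ j ≤ n₂, c' (n + j) = c₂ j := by
  obtain ⟨h0, hmem, hstep⟩ := h
  obtain ⟨h0₂, hmem₂, hstep₂⟩ := h₂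
  set c' : ℕ → X := fun i => if i ≤ n then c i else c₂ (i - n) with hc'
  have hleft : ∀ i ≤ n, c' i = c i := fun i hi => if_pos hi
  have hright : ∀ j, c' (n + j) = c₂ j := by
    intro j
    rcases Nat.eq_zero_or_pos j with rfl | hj
    · simp [hc', h0₂]
    · have : ¬ n + j ≤ n := by omega
      simp only [hc', if_neg this, Nat.add_sub_cancel_left]
  refine ⟨c', ⟨by rw [hleft 0 (Nat.zero_le n), h0], ?_, ?_⟩, hleft, fun j _ => hright j⟩
  · intro i
    simp only [hc']
    split
    · exact hmem i
    · exact hmem₂ _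
  · intro i hi
    by_cases h1 : i + 1 ≤ n
    · rw [hleft i (by omega), hleft (i + 1) h1]
      exact hstep i (by omega)
    · have hin : n ≤ i := by omega
      obtain ⟨j, rfl⟩ := Nat.exists_eq_add_of_le hin
      rw [hright j, show n + j + 1 = n + (j + 1) from rfl, hright (j + 1)]
      exact hstep₂ j (by omega)


lemma finite_dense {S P : Set X} (hcomp : IsCompact S) (hP : S ⊆ closure P)
    {δ : ℝ} (hδ : 0 < δ) :
    ∃ F : Finset X, (↑F : Set X) ⊆ P ∧ ∀ s ∈ S, ∃ p ∈ F, dist s p < δ := by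
  have hcov : S ⊆ ⋃ p : P, Metric.ball (p : X) δ := by
    intro s hs
    obtain ⟨p, hpP, hpd⟩ := Metric.mem_closure_iff.1 (hP hs) δ hδ
    exact Set.mem_iUnion.2 ⟨⟨p, hpP⟩, Metric.mem_ball.2 hpd⟩
  obtain ⟨t, ht⟩ := hcomp.elim_finite_subcover (fun p : P => Metric.ball (p : X) δ)
    (fun _ => Metric.isOpen_ball) hcov
  classical
  refine ⟨t.image Subtype.val, ?_, ?_⟩
  · intro x hx
    simp only [Finset.coe_image, Set.mem_image] at hx
    obtain ⟨⟨p, hp⟩, _, rfl⟩ := hx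
    exact hp
  · intro s hs
    obtain ⟨p, hpt, hpd⟩ := Set.mem_iUnion₂.1 (ht hs)
    exact ⟨p, Finset.mem_image_of_mem _ hpt, Metric.mem_ball.1 hpd⟩

lemma chainIn_approx' {S P : Set X} (hP : S ⊆ closure P)
    (hconn : IsPreconnected S) (hPS : P ⊆ S) {a b : X}
    (ha : a ∈ P) (hb : b ∈ P) {δ : ℝ} (hδ : 0 < δ) :
    ∃ n c, GoodChain P (3 * δ) a n c ∧ c n = b :=
  chainIn_approx hP ha hb hδ (hconn.chainIn (hPS ha) (hPS hb) hδ)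

lemma visit_chain {S P : Set X} (hP : S ⊆ closure P) (hPS : P ⊆ S)
    (hconn : IsPreconnected S) {δ : ℝ} (hδ : 0 < δ) :
    ∀ (l : List X), (∀ p ∈ l, p ∈ P) → ∀ a ∈ P,
      ∃ n c, GoodChain P (3 * δ) a n c ∧ ∀ p ∈ l, ∃ i ≤ n, c i = p := by
  intro l
  induction l with
  | nil =>
    intro _ a ha
    exact ⟨0, fun _ => a, ⟨rfl, fun _ => ha, fun i hi => absurd hi (Nat.not_lt_zero i)⟩,
      by simp⟩
  | cons q l ih =>
    intro hl a ha
    obtain ⟨n, c, hgc, hvis⟩ := ih (fun p hp => hl p (List.mem_cons_of_mem q hp)) a ha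
    have hq : q ∈ P := hl q (List.mem_cons_self (a := q) (l := l))
    obtain ⟨n₂, c₂, hgc₂, hend⟩ := chainIn_approx' hP hconn hPS (hgc.2.1 n) hq hδ
    obtain ⟨c', hgc', hleft, hright⟩ := goodChain_append hgc hgc₂
    refine ⟨n + n₂, c', hgc', ?_⟩
    intro p hp
    rcases List.mem_cons.1 hp with rfl | hp
    · exact ⟨n + n₂, le_refl _, by rw [hright n₂ (le_refl _), hend]⟩
    · obtain ⟨i, hi, hci⟩ := hvis p hp
      exact ⟨i, by omega, by rw [hleft i hi, hci]⟩

lemma block_exists {S P : Set X} (hcomp : IsCompact S) (hP : S ⊆ closure P)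
    (hPS : P ⊆ S) (hconn : IsPreconnected S) {δ : ℝ} (hδ : 0 < δ) {e : X} (he : e ∈ P) :
    ∃ n c, 0 < n ∧ GoodChain P (3 * δ) e n c ∧ ∀ s ∈ S, ∃ i ≤ n, dist s (c i) < δ := by
  obtain ⟨F, hFP, hFd⟩ := finite_dense hcomp hP hδ
  obtain ⟨n, c, hgc, hvis⟩ := visit_chain hP hPS hconn hδ F.toList
    (fun p hp => hFP (by simpa using hp)) e he
  refine ⟨n + 1, fun i => c (min i n), Nat.succ_pos n, ⟨by simpa using hgc.1,
    fun i => hgc.2.1 _, ?_⟩, ?_⟩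
  · intro i hi
    show dist (c (min i n)) (c (min (i + 1) n)) < 3 * δ
    by_cases h : i < n
    · have e1 : min i n = i := by omega
      have e2 : min (i + 1) n = i + 1 := by omega
      rw [e1, e2]
      exact hgc.2.2 i h
    · have e1 : min i n = n := by omega
      have e2 : min (i + 1) n = n := by omega
      rw [e1, e2, dist_self]
      linarith
  · intro s hs
    obtain ⟨p, hpF, hpd⟩ := hFd s hs
    obtain ⟨i, hi, hci⟩ := hvis p (by simpa using hpF)
    have e1 : min i n = i := by omega
    refine ⟨i, by omega, ?_⟩
    show dist s (c (min i n)) < δ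
    rw [e1, hci]
    exact hpd

theorem abstract_chain (S P : Set X)
    (hPS : P ⊆ S) (hP : S ⊆ closure P) (hcomp : IsCompact S)
    (hconn : IsPreconnected S) (hne : S.Nonempty) :
    ∃ (Y : ℕ → X) (ε : ℕ → ℝ), (∀ n, Y n ∈ P) ∧ Tendsto ε atTop (nhds 0) ∧
      (∀ n, 0 < ε n) ∧ (∀ n, dist (Y (n + 1)) (Y n) ≤ ε n) ∧
      ∀ s ∈ S, ∀ N : ℕ, ∃ n, N ≤ n ∧ dist s (Y n) ≤ ε n := by
  obtain ⟨e₀, he₀⟩ : P.Nonempty := by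
    obtain ⟨s, hs⟩ := hne
    exact closure_nonempty_iff.1 ⟨s, hP hs⟩
  set δ : ℕ → ℝ := fun m => 1 / (m + 1) with hδdef
  have hδpos : ∀ m : ℕ, 0 < δ m := fun m => by positivity
  have H : ∀ (m : ℕ) (x : X), x ∈ P → ∃ n c, 0 < n ∧ GoodChain P (3 * δ m) x n c ∧
      ∀ s ∈ S, ∃ i ≤ n, dist s (c i) < δ m :=
    fun m x hx => block_exists hcomp hP hPS hconn (hδpos m) hx
  choose! L C hpos hgc hdns using H
  obtain ⟨e, he0, hesucc⟩ : ∃ e : ℕ → X, e 0 = e₀ ∧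
      ∀ m, e (m + 1) = C m (e m) (L m (e m)) :=
    ⟨fun m => Nat.rec e₀ (fun m em => C m em (L m em)) m, rfl, fun m => rfl⟩
  have heP : ∀ m, e m ∈ P := by
    intro m
    induction m with
    | zero => rw [he0]; exact he₀
    | succ m ih => rw [hesucc m]; exact (hgc m (e m) ih).2.1 _
  set ℓ : ℕ → ℕ := fun m => L m (e m) with hℓdef
  set cc : ℕ → ℕ → X := fun m => C m (e m) with hccdef
  have h0 : ∀ m, cc m 0 = e m := fun m => (hgc m (e m) (heP m)).1
  have hmem : ∀ m i, cc m i ∈ P := fun m i => (hgc m (e m) (heP m)).2.1 i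
  have hstep : ∀ m, ∀ i < ℓ m, dist (cc m i) (cc m (i + 1)) < 3 * δ m :=
    fun m i hi => (hgc m (e m) (heP m)).2.2 i hi
  have hℓpos : ∀ m, 0 < ℓ m := fun m => hpos m (e m) (heP m)
  have hdense : ∀ m, ∀ s ∈ S, ∃ i ≤ ℓ m, dist s (cc m i) < δ m :=
    fun m s hs => hdns m (e m) (heP m) s hs
  have hen : ∀ m, e (m + 1) = cc m (ℓ m) := fun m => hesucc m
  set start : ℕ → ℕ := fun m => ∑ j ∈ Finset.range m, ℓ j with hstartdef
  have hstartsucc : ∀ m, start (m + 1) = start m + ℓ m := fun m =>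
    Finset.sum_range_succ _ _
  have hstartmono : StrictMono start := strictMono_nat_of_lt_succ fun m => by
    rw [hstartsucc m]; have := hℓpos m; omega
  have hstart0 : start 0 = 0 := Finset.sum_range_zero _
  have hstartle : ∀ m, m ≤ start m := fun m => hstartmono.le_apply
  set mIdx : ℕ → ℕ := fun n => Nat.findGreatest (fun m => start m ≤ n) n with hmIdxdef
  have h1 : ∀ n, start (mIdx n) ≤ n := by
    intro n
    have h0' : start 0 ≤ n := by rw [hstart0]; exact Nat.zero_le n
    exact Nat.findGreatest_spec (P := fun m => start m ≤ n) (Nat.zero_le n) h0'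
  have h2 : ∀ n, n < start (mIdx n + 1) := by
    intro n
    by_contra h
    push_neg at h
    have h3 : mIdx n + 1 ≤ n := le_trans (hstartle _) h
    have h4 : mIdx n + 1 ≤ mIdx n :=
      Nat.le_findGreatest (P := fun m => start m ≤ n) h3 h
    omega
  have hmIdx_eq : ∀ m n, start m ≤ n → n < start (m + 1) → mIdx n = m := by
    intro m n hmn hn
    have hge : m ≤ mIdx n :=
      Nat.le_findGreatest (P := fun m => start m ≤ n) (le_trans (hstartle m) hmn) hmn
    have hle : mIdx n ≤ m := by
      by_contra h
      push_neg at h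
      have h5 : start (m + 1) ≤ start (mIdx n) := hstartmono.monotone h
      have := h1 n
      omega
    omega
  have hmTop : Tendsto mIdx atTop atTop := by
    refine tendsto_atTop_atTop.2 fun M => ⟨start M, fun n hn => ?_⟩
    have h3 : start M < start (mIdx n + 1) := lt_of_le_of_lt hn (h2 n)
    have := hstartmono.lt_iff_lt.1 h3
    omega
  set Y : ℕ → X := fun n => cc (mIdx n) (n - start (mIdx n)) with hYdef
  set ε : ℕ → ℝ := fun n => 3 * δ (mIdx n) with hεdef
  have hYmem : ∀ n, Y n ∈ P := fun n => hmem _ _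
  have hεpos : ∀ n, 0 < ε n := fun n => by
    have := hδpos (mIdx n); simp only [hεdef]; linarith
  have hε0 : Tendsto ε atTop (nhds 0) := by
    have hδ0 : Tendsto (fun m : ℕ => 3 * δ m) atTop (nhds 0) := by
      simp only [hδdef]
      have h := tendsto_one_div_add_atTop_nhds_zero_nat.const_mul (3 : ℝ)
      simpa using h
    exact hδ0.comp hmTop
  have hYstep : ∀ n, dist (Y (n + 1)) (Y n) ≤ ε n := by
    intro n
    have ha : start (mIdx n) ≤ n := h1 n
    have hb : n < start (mIdx n + 1) := h2 n
    rcases lt_or_eq_of_le (Nat.succ_le_of_lt hb) with hc | hc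
    · -- same block
      have hm1 : mIdx (n + 1) = mIdx n := hmIdx_eq (mIdx n) (n + 1) (by omega) hc
      have hi : n - start (mIdx n) < ℓ (mIdx n) := by
        have := hstartsucc (mIdx n); omega
      have eY : Y (n + 1) = cc (mIdx n) ((n - start (mIdx n)) + 1) := by
        simp only [hYdef, hm1]
        congr 1
        omega
      rw [eY]
      simp only [hYdef, hεdef, dist_comm]
      exact le_of_lt (hstep (mIdx n) _ hi)
    · -- block boundary
      have hm1 : mIdx (n + 1) = mIdx n + 1 := by
        refine hmIdx_eq (mIdx n + 1) (n + 1) (le_of_eq hc.symm) ?_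
        rw [hstartsucc (mIdx n + 1)]
        have := hℓpos (mIdx n + 1)
        omega
      have hi1 : n - start (mIdx n) + 1 = ℓ (mIdx n) := by
        have := hstartsucc (mIdx n); omega
      have eY : Y (n + 1) = cc (mIdx n) ((n - start (mIdx n)) + 1) := by
        simp only [hYdef, hm1]
        have e1 : n + 1 - start (mIdx n + 1) = 0 := by omega
        rw [e1, h0 (mIdx n + 1), hen (mIdx n), hi1]
      rw [eY]
      simp only [hYdef, hεdef, dist_comm]
      exact le_of_lt (hstep (mIdx n) _ (by omega))
  have hYdns : ∀ s ∈ S, ∀ N : ℕ, ∃ n, N ≤ n ∧ dist s (Y n) ≤ ε n := by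
    intro s hs N
    obtain ⟨i, hi, hid⟩ := hdense N s hs
    refine ⟨start N + i, by have := hstartle N; omega, ?_⟩
    rcases lt_or_eq_of_le hi with hi' | hi'
    · have hm1 : mIdx (start N + i) = N := by
        refine hmIdx_eq N _ (by omega) ?_
        rw [hstartsucc N]; omega
      have eY : Y (start N + i) = cc N i := by
        simp only [hYdef, hm1]
        congr 1
        omega
      have eε : ε (start N + i) = 3 * δ N := by simp only [hεdef, hm1]
      rw [eY, eε]
      have := hδpos N
      linarith
    · subst hi'
      have hn1 : start N + ℓ N = start (N + 1) := (hstartsucc N).symm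
      have hm1 : mIdx (start N + ℓ N) = N + 1 := by
        refine hmIdx_eq (N + 1) _ (le_of_eq hn1.symm) ?_
        rw [hstartsucc (N + 1)]
        have := hℓpos (N + 1)
        omega
      have eY : Y (start N + ℓ N) = cc N (ℓ N) := by
        simp only [hYdef, hm1]
        have e1 : start N + ℓ N - start (N + 1) = 0 := by omega
        rw [e1, h0 (N + 1), hen N]
      have eε : ε (start N + ℓ N) = 3 * δ (N + 1) := by simp only [hεdef, hm1]
      rw [eY, eε]
      refine le_trans (le_of_lt hid) ?_
      have key : (1 : ℝ) / ((N : ℝ) + 1) ≤ 3 / ((N : ℝ) + 1 + 1) := by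
        rw [div_le_div_iff₀ (by positivity) (by positivity)]
        nlinarith [Nat.cast_nonneg (α := ℝ) N]
      calc δ N = 1 / ((N : ℝ) + 1) := rfl
        _ ≤ 3 / ((N : ℝ) + 1 + 1) := key
        _ = 3 * δ (N + 1) := by simp only [hδdef]; push_cast; ring
  exact ⟨Y, ε, hYmem, hε0, hεpos, hYstep, hYdns⟩

end AbstractChain

/-- if the periodic measures are dense in `M_f(Λ)` and `M_f(Λ)` is
compact and connected in the weak* topology, then (for some metric compatible with
the weak* topology) there is a chain of closed balls `B_n ⊆ M_f(Λ)` centered at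
periodic measures `Y_n` with radii `ε_n → 0` such that consecutive balls intersect
and `⋂_N ⋃_{n ≥ N} B_n = M_f(Λ)`. -/
theorem chain_of_balls_from_dense_periodic_measures
    [MetricSpace Λ] [CompactSpace Λ] [MeasurableSpace Λ] [BorelSpace Λ]
    (f : Λ → Λ) (hf : Continuous f)
    (hdense : closure {μ : ProbabilityMeasure Λ |
        ∃ x : Λ, ∃ k : ℕ, ∃ hk : 0 < k, f^[k] x = x ∧ μ = perP f x k hk} = invProb f)
    (hcomp : IsCompact (invProb f)) (hconn : IsConnected (invProb f)) :
    ∃ dm : MetricSpace (ProbabilityMeasure Λ),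
      dm.toUniformSpace.toTopologicalSpace =
        (inferInstance : TopologicalSpace (ProbabilityMeasure Λ)) ∧
      ∃ (Y : ℕ → ProbabilityMeasure Λ) (ε : ℕ → ℝ),
        (∀ n, ∃ x : Λ, ∃ k : ℕ, ∃ hk : 0 < k, f^[k] x = x ∧ Y n = perP f x k hk) ∧
        Tendsto ε atTop (nhds 0) ∧
        (∀ n, (0 : ℝ) < ε n) ∧
        (∀ n, (@Metric.closedBall _ dm.toPseudoMetricSpace (Y n) (ε n) ∩ invProb f)
            ⊆ invProb f) ∧
        (∀ n, ((@Metric.closedBall _ dm.toPseudoMetricSpace (Y n) (ε n) ∩ invProb f) ∩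
            (@Metric.closedBall _ dm.toPseudoMetricSpace (Y (n+1)) (ε (n+1)) ∩
              invProb f)).Nonempty) ∧
        (⋂ N : ℕ, ⋃ n ∈ {n : ℕ | N ≤ n},
            (@Metric.closedBall _ dm.toPseudoMetricSpace (Y n) (ε n) ∩ invProb f))
          = invProb f := by
  obtain ⟨dm, hdm⟩ :=
    (show ∃ dm : MetricSpace (ProbabilityMeasure Λ), dm.toUniformSpace.toTopologicalSpace =
      (inferInstance : TopologicalSpace (ProbabilityMeasure Λ)) from
      ⟨TopologicalSpace.metrizableSpaceMetric _, rfl⟩)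
  set P : Set (ProbabilityMeasure Λ) := {μ : ProbabilityMeasure Λ |
    ∃ x : Λ, ∃ k : ℕ, ∃ hk : 0 < k, f^[k] x = x ∧ μ = perP f x k hk} with hPdef
  set S : Set (ProbabilityMeasure Λ) := invProb f with hSdef
  have hPS : P ⊆ S := hdense ▸ subset_closure
  have hne : S.Nonempty := hconn.nonempty
  have hcl : @closure _ dm.toUniformSpace.toTopologicalSpace P = closure P := by
    rw [hdm]
  have hP' : S ⊆ @closure _ dm.toUniformSpace.toTopologicalSpace P := by
    rw [hcl]
    exact le_of_eq hdense.symm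
  have hcomp' : @IsCompact _ dm.toUniformSpace.toTopologicalSpace S := by
    rw [hdm]; exact hcomp
  have hconn' : @IsPreconnected _ dm.toUniformSpace.toTopologicalSpace S := by
    rw [hdm]; exact hconn.isPreconnected
  obtain ⟨Y, ε, hYP, hε0, hεpos, hstep, hdns⟩ :=
    @abstract_chain _ dm S P hPS hP' hcomp' hconn' hne
  refine ⟨dm, hdm, Y, ε, fun n => hYP n, hε0, hεpos,
    fun n => Set.inter_subset_right, fun n => ?_, ?_⟩
  · refine ⟨Y (n + 1), ⟨?_, hPS (hYP (n + 1))⟩, ?_, hPS (hYP (n + 1))⟩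
    · exact (@Metric.mem_closedBall _ dm.toPseudoMetricSpace _ _ _).2 (hstep n)
    · exact @Metric.mem_closedBall_self _ dm.toPseudoMetricSpace _ _ (hεpos (n + 1)).le
  · ext μ
    constructor
    · intro h
      have h0 := Set.mem_iInter.1 h 0
      obtain ⟨n, -, -, hμS⟩ := Set.mem_iUnion₂.1 h0
      exact hμS
    · intro hμ
      refine Set.mem_iInter.2 fun N => ?_
      obtain ⟨n, hn, hd⟩ := hdns μ hμ N
      exact Set.mem_biUnion (show n ∈ {n : ℕ | N ≤ n} from hn)
        ⟨(@Metric.mem_closedBall _ dm.toPseudoMetricSpace _ _ _).2 hd, hμ⟩
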